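/- Let A be a finitely generated free abelian group and let (K_i)_{i ∈ I} be a family of subgroups of A such that each quotient A/K_i is torsion-free and ⋂_{i ∈ I} K_i = {0}. Then there exists a finite subset I_0 ⊆ I such that ⋂_{i ∈ I_0} K_i = {0}. -/

import Mathlib

/-- Clearing denominators: any element of a `ℚ`-span is, up to a nonzero integer
multiple, in the `ℤ`-span. -/
lemma exists_int_smul_mem_span_int {M : Type*} [AddCommGroup M] [Module ℚ M]
    (S : Set M) (x : M) (hx : x ∈ Submodule.span ℚ S) :
    ∃ n : ℤ, n ≠ 0 ∧ (n : ℚ) • x ∈ Submodule.span ℤ S := by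
  induction hx using Submodule.span_induction with
  | mem y hy => exact ⟨1, one_ne_zero, by simpa using Submodule.subset_span hy⟩
  | zero => exact ⟨1, one_ne_zero, by simp⟩
  | add y z _ _ hy hz =>
      obtain ⟨n, hn, hny⟩ := hy
      obtain ⟨m, hm, hmz⟩ := hz
      refine ⟨n * m, mul_ne_zero hn hm, ?_⟩
      have h1 : ((n * m : ℤ) : ℚ) • (y + z)
          = m • ((n : ℚ) • y) + n • ((m : ℚ) • z) := by
        rw [← Int.cast_smul_eq_zsmul ℚ m, ← Int.cast_smul_eq_zsmul ℚ n,
          smul_smul, smul_smul, smul_add]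
        push_cast
        ring_nf
      rw [h1]
      exact Submodule.add_mem _ (Submodule.smul_mem _ _ hny) (Submodule.smul_mem _ _ hmz)
  | smul q y _ hy =>
      obtain ⟨n, hn, hny⟩ := hy
      refine ⟨n * (q.den : ℤ), mul_ne_zero hn (by exact_mod_cast q.den_pos.ne'), ?_⟩
      have h1 : ((n * (q.den : ℤ) : ℤ) : ℚ) • (q • y) = q.num • ((n : ℚ) • y) := by
        rw [← Int.cast_smul_eq_zsmul ℚ q.num, smul_smul, smul_smul]
        push_cast
        rw [mul_assoc, mul_comm (q.den : ℚ) q, Rat.mul_den_eq_num]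
        ring_nf
      rw [h1]
      exact Submodule.smul_mem _ _ hny

/-- Let `A` be a finitely generated free abelian group and `(K i)_{i ∈ I}`
a family of subgroups of `A` such that each quotient `A / K i` is torsion-free (i.e. each
`K i` is saturated) and `⋂ i, K i = {0}`. Then there is a finite subset `I₀ ⊆ I` with
`⋂_{i ∈ I₀} K i = {0}`. -/
theorem exists_finite_subfamily_inf_eq_bot_of_saturated
    (A : Type*) [AddCommGroup A] [Module.Free ℤ A] [Module.Finite ℤ A]
    {I : Type*} (K : I → AddSubgroup A)
    (hsat : ∀ i, ∀ (n : ℤ) (a : A), n ≠ 0 → n • a ∈ K i → a ∈ K i)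
    (hint : (⨅ i, K i) = ⊥) :
    ∃ s : Finset I, (⨅ i ∈ s, K i) = ⊥ := by
  classical
  set ι := Module.Free.ChooseBasisIndex ℤ A
  let b : Module.Basis ι ℤ A := Module.Free.chooseBasis ℤ A
  -- the coordinate embedding of `A` into the `ℚ`-vector space `ι → ℚ`
  let φ : A →ₗ[ℤ] (ι → ℚ) :=
    { toFun := fun a i => ((b.repr a i : ℤ) : ℚ)
      map_add' := by
        intro x y; funext i
        simp only [map_add, Finsupp.coe_add, Pi.add_apply]
        push_cast
        ring
      map_smul' := by
        intro n x; funext i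
        simp only [map_smul, Finsupp.coe_smul, Pi.smul_apply, zsmul_eq_mul,
          RingHom.id_apply, Pi.intCast_apply]
        push_cast
        ring }
  have hφinj : Function.Injective φ := by
    intro x y hxy
    apply b.repr.injective
    ext i
    have : ((b.repr x i : ℤ) : ℚ) = ((b.repr y i : ℤ) : ℚ) := congrFun hxy i
    exact_mod_cast this
  -- the `ℚ`-spans of the images
  let W : I → Submodule ℚ (ι → ℚ) := fun i => Submodule.span ℚ (φ '' (K i))
  -- key: membership of `φ a` in `W i` implies `a ∈ K i`, by saturation
  have hback : ∀ i (a : A), φ a ∈ W i → a ∈ K i := by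
    intro i a ha
    obtain ⟨n, hn, hna⟩ := exists_int_smul_mem_span_int _ _ ha
    rw [Int.cast_smul_eq_zsmul, ← map_smul] at hna
    have hspan : Submodule.span ℤ (φ '' (K i))
        = Submodule.map φ (Submodule.span ℤ (K i : Set A)) := Submodule.span_image φ
    rw [hspan] at hna
    obtain ⟨c, hc, hceq⟩ := hna
    have hcK : c ∈ (K i).toIntSubmodule := by
      have : Submodule.span ℤ (K i : Set A) ≤ (K i).toIntSubmodule :=
        Submodule.span_le.mpr (fun x hx => hx)
      exact this hc
    have : c = n • a := hφinj hceq
    exact hsat i n a hn (this ▸ hcK)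
  -- pick a finite subfamily minimizing the dimension of the intersection of the spans
  let f : Finset I → ℕ := fun s => Module.finrank ℚ (⨅ i ∈ s, W i : Submodule ℚ (ι → ℚ))
  have hne : (Set.range f).Nonempty := ⟨f ∅, ⟨∅, rfl⟩⟩
  obtain ⟨s, hs⟩ := Nat.sInf_mem hne
  have hmin : ∀ t : Finset I, f s ≤ f t := by
    intro t
    rw [hs]
    exact Nat.sInf_le ⟨t, rfl⟩
  -- the minimal intersection is contained in every `W j`
  have hle : ∀ j, (⨅ i ∈ s, W i) ≤ W j := by
    intro j
    have h1 : (⨅ i ∈ insert j s, W i) = W j ⊓ ⨅ i ∈ s, W i := by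
      exact Finset.iInf_insert j s W
    have h2 : (⨅ i ∈ insert j s, W i) ≤ ⨅ i ∈ s, W i := by
      rw [h1]; exact inf_le_right
    have h3 : (⨅ i ∈ insert j s, W i) = ⨅ i ∈ s, W i :=
      Submodule.eq_of_le_of_finrank_le h2 (hmin (insert j s))
    rw [← h3, h1]
    exact inf_le_left
  refine ⟨s, ?_⟩
  rw [eq_bot_iff]
  intro a ha
  have haK : ∀ j, a ∈ K j := by
    intro j
    apply hback j
    apply hle j
    simp only [Submodule.mem_iInf]
    intro i hi
    have hmem : ∀ k ∈ s, a ∈ K k := by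
      simpa [AddSubgroup.mem_iInf] using ha
    exact Submodule.subset_span ⟨a, hmem i hi, rfl⟩
  have : a ∈ (⨅ i, K i) := (AddSubgroup.mem_iInf).mpr haK
  rwa [hint] at this
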